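/- Every subgroup of the dicyclic group Q_{4n} (n ≥ 1) is either cyclic or isomorphic to a dicyclic group Q_{4m} for some m ≥ 1. (Lemma 3.1, first part) -/

import Mathlib

namespace QuaternionGroupAux

open QuaternionGroup

@[simp] lemma inv_a {n : ℕ} (i : ZMod (2 * n)) :
    (QuaternionGroup.a i)⁻¹ = QuaternionGroup.a (-i) := rfl

@[simp] lemma inv_xa {n : ℕ} (i : ZMod (2 * n)) :
    (QuaternionGroup.xa i)⁻¹ = QuaternionGroup.xa ((n : ZMod (2 * n)) + i) := rfl

lemma a_pow {n : ℕ} (r : ZMod (2 * n)) (k : ℕ) :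
    (QuaternionGroup.a r) ^ k = QuaternionGroup.a ((k : ZMod (2 * n)) * r) := by
  induction k with
  | zero => simp [QuaternionGroup.one_def, -QuaternionGroup.a_zero]
  | succ k ih =>
    rw [pow_succ, ih, QuaternionGroup.a_mul_a]
    congr 1
    push_cast
    ring

lemma a_zpow {n : ℕ} (r : ZMod (2 * n)) (c : ℤ) :
    (QuaternionGroup.a r) ^ c = QuaternionGroup.a ((c : ZMod (2 * n)) * r) := by
  obtain ⟨k, rfl | rfl⟩ := Int.eq_nat_or_neg c
  · rw [zpow_natCast, a_pow]; push_cast; ring_nf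
  · rw [zpow_neg, zpow_natCast, a_pow, inv_a]
    congr 1
    push_cast
    ring

end QuaternionGroupAux

/-- Every subgroup of the dicyclic group `Q_{4n}` (n ≥ 1) is either cyclic or
isomorphic to a dicyclic group `Q_{4m}` for some `m ≥ 1`. -/
theorem subgroup_quaternionGroup_isCyclic_or_dicyclic (n : ℕ) (hn : 1 ≤ n)
    (H : Subgroup (QuaternionGroup n)) :
    IsCyclic H ∨ ∃ m : ℕ, 1 ≤ m ∧ Nonempty (H ≃* QuaternionGroup m) := by
  haveI : NeZero (2 * n) := ⟨by omega⟩
  -- The subgroup of ℤ of exponents c with a^c ∈ H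
  set S : AddSubgroup ℤ :=
    { carrier := {c : ℤ | QuaternionGroup.a ((c : ZMod (2 * n))) ∈ H}
      zero_mem' := by
        simpa [QuaternionGroup.one_def, -QuaternionGroup.a_zero] using (one_mem H : (1 : QuaternionGroup n) ∈ H)
      add_mem' := by
        intro x y hx hy
        have hx' : QuaternionGroup.a ((x : ZMod (2 * n))) ∈ H := hx
        have hy' : QuaternionGroup.a ((y : ZMod (2 * n))) ∈ H := hy
        have h := mul_mem hx' hy'
        rw [QuaternionGroup.a_mul_a] at h
        simpa [Int.cast_add] using h
      neg_mem' := by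
        intro x hx
        have hx' : QuaternionGroup.a ((x : ZMod (2 * n))) ∈ H := hx
        have h := inv_mem hx'
        rw [QuaternionGroupAux.inv_a] at h
        simpa [Int.cast_neg] using h } with hS
  obtain ⟨e, hSe⟩ := Int.subgroup_cyclic S
  have hmem : ∀ c : ℤ, QuaternionGroup.a ((c : ZMod (2 * n))) ∈ H ↔ e ∣ c := by
    intro c
    have : c ∈ S ↔ QuaternionGroup.a ((c : ZMod (2 * n))) ∈ H := Iff.rfl
    rw [← this, hSe, AddSubgroup.mem_closure_singleton]
    constructor
    · rintro ⟨k, rfl⟩; rw [zsmul_eq_mul]; exact dvd_mul_left e k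
    · rintro ⟨k, rfl⟩; exact ⟨k, by rw [zsmul_eq_mul, Int.cast_id]; ring⟩
  by_cases hxa : ∀ i : ZMod (2 * n), QuaternionGroup.xa i ∉ H
  · -- H consists only of powers of a, hence is cyclic
    left
    have hgen : QuaternionGroup.a ((e : ZMod (2 * n))) ∈ H := (hmem e).2 dvd_rfl
    refine ⟨⟨⟨_, hgen⟩, ?_⟩⟩
    rintro ⟨x, hx⟩
    rcases x with i | i
    · obtain ⟨c, rfl⟩ := ZMod.intCast_surjective i
      obtain ⟨k, rfl⟩ := (hmem c).1 hx
      refine ⟨k, ?_⟩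
      apply Subtype.ext
      show (QuaternionGroup.a ((e : ZMod (2 * n)))) ^ k = _
      rw [QuaternionGroupAux.a_zpow]
      congr 1
      push_cast
      ring
    · exact absurd hx (hxa i)
  · -- H contains some xa j, and is dicyclic
    push_neg at hxa
    obtain ⟨j, hj⟩ := hxa
    right
    -- a^n ∈ H
    have hne : e ∣ (n : ℤ) := by
      have h := mul_mem hj hj
      rw [QuaternionGroup.xa_mul_xa] at h
      have h' : QuaternionGroup.a (((n : ℤ) : ZMod (2 * n))) ∈ H := by
        simpa using h
      exact (hmem n).1 h'
    set d := e.natAbs with hd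
    have hdn : d ∣ n := Int.natCast_dvd_natCast.mp (Int.natAbs_dvd.mpr hne)
    have hd0 : d ≠ 0 := by
      rintro h
      rw [h] at hdn
      omega
    set m := n / d with hmdef
    have hm : d * m = n := Nat.mul_div_cancel' hdn
    have hm1 : 1 ≤ m := by
      rcases Nat.eq_zero_or_pos m with h | h
      · rw [h, Nat.mul_zero] at hm; omega
      · exact h
    refine ⟨m, hm1, ?_⟩
    haveI : NeZero (2 * m) := ⟨by omega⟩
    have hmem' : ∀ c : ℤ, QuaternionGroup.a ((c : ZMod (2 * n))) ∈ H ↔ (d : ℤ) ∣ c :=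
      fun c => (hmem c).trans (Int.natAbs_dvd (a := e) (b := c)).symm
    -- the additive embedding ZMod (2m) →+ ZMod (2n), x ↦ d * x
    set f : ℤ →+ ZMod (2 * n) :=
      (Int.castAddHom (ZMod (2 * n))).comp (AddMonoidHom.mulRight (d : ℤ)) with hfdef
    have hfval : ∀ c : ℤ, f c = ((c * d : ℤ) : ZMod (2 * n)) := fun c => rfl
    have h2md : ((2 * m : ℤ)) * d = ((2 * n : ℕ) : ℤ) := by
      push_cast [← hm]; ring
    have hf : f ((2 * m : ℕ) : ℤ) = 0 := by
      rw [hfval]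
      have h3 : (((2 * m : ℕ) : ℤ)) * d = ((2 * n : ℕ) : ℤ) := by push_cast [← hm]; ring
      rw [h3]
      exact_mod_cast ZMod.natCast_self (2 * n)
    set ι : ZMod (2 * m) →+ ZMod (2 * n) := ZMod.lift (2 * m) ⟨f, hf⟩ with hιdef
    have hι : ∀ c : ℤ, ι ((c : ZMod (2 * m))) = ((c * d : ℤ) : ZMod (2 * n)) := fun c =>
      ZMod.lift_coe (2 * m) ⟨f, hf⟩ c
    have hιinj : Function.Injective ι := by
      rw [injective_iff_map_eq_zero]
      intro x hx
      obtain ⟨c, rfl⟩ := ZMod.intCast_surjective x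
      rw [hι, ZMod.intCast_zmod_eq_zero_iff_dvd] at hx
      rw [ZMod.intCast_zmod_eq_zero_iff_dvd]
      rw [← h2md] at hx
      have hd0' : (d : ℤ) ≠ 0 := by exact_mod_cast hd0
      exact (mul_dvd_mul_iff_right hd0').mp hx
    have hιm : ι ((m : ℕ) : ZMod (2 * m)) = ((n : ℕ) : ZMod (2 * n)) := by
      have h := hι (m : ℤ)
      push_cast at h
      rw [h]
      have : ((m : ℤ)) * d = ((n : ℕ) : ℤ) := by push_cast [← hm]; ring
      exact_mod_cast congrArg (fun z : ℤ => ((z : ZMod (2 * n)))) this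
    -- the homomorphism QuaternionGroup m →* QuaternionGroup n
    set φfun : QuaternionGroup m → QuaternionGroup n := fun x =>
      match x with
      | QuaternionGroup.a i => QuaternionGroup.a (ι i)
      | QuaternionGroup.xa i => QuaternionGroup.xa (j + ι i) with hφfun
    have hφmul : ∀ x y, φfun (x * y) = φfun x * φfun y := by
      rintro (i | i) (i' | i') <;>
        simp only [hφfun, QuaternionGroup.a_mul_a, QuaternionGroup.a_mul_xa,
          QuaternionGroup.xa_mul_a, QuaternionGroup.xa_mul_xa, map_add, map_sub]
      · ring_nf
      · ring_nf
      · rw [hιm]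
        ring_nf
    set φ : QuaternionGroup m →* QuaternionGroup n := MonoidHom.mk' φfun hφmul with hφdef
    have hφa : ∀ i, φ (QuaternionGroup.a i) = QuaternionGroup.a (ι i) := fun i => rfl
    have hφxa : ∀ i, φ (QuaternionGroup.xa i) = QuaternionGroup.xa (j + ι i) := fun i => rfl
    have hφinj : Function.Injective φ := by
      rintro (i | i) (i' | i') h <;>
        simp only [hφa, hφxa, QuaternionGroup.a.injEq, QuaternionGroup.xa.injEq,
          reduceCtorEq] at h
      · rw [hιinj h]
      · rw [hιinj (add_left_cancel h)]
    have hφrange : φ.range = H := by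
      ext x
      constructor
      · rintro ⟨y, rfl⟩
        rcases y with i | i
        · rw [hφa]
          obtain ⟨c, rfl⟩ := ZMod.intCast_surjective i
          rw [hι]
          exact (hmem' _).2 ⟨c, by ring⟩
        · rw [hφxa]
          obtain ⟨c, rfl⟩ := ZMod.intCast_surjective i
          have h1 : QuaternionGroup.a (ι ((c : ZMod (2 * m)))) ∈ H := by
            rw [hι]; exact (hmem' _).2 ⟨c, by ring⟩
          have h2 := mul_mem hj h1
          rw [QuaternionGroup.xa_mul_a] at h2
          exact h2
      · intro hx
        rcases x with i | i
        · obtain ⟨c, rfl⟩ := ZMod.intCast_surjective i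
          obtain ⟨k, hk⟩ := (hmem' c).1 hx
          refine ⟨QuaternionGroup.a ((k : ZMod (2 * m))), ?_⟩
          rw [hφa, hι]
          congr 1
          rw [hk]
          push_cast
          ring
        · obtain ⟨c, hc⟩ : ∃ c : ℤ, ((c : ZMod (2 * n))) = i - j :=
            ZMod.intCast_surjective _
          have h1 : QuaternionGroup.a ((c : ZMod (2 * n))) ∈ H := by
            have h2 := mul_mem (inv_mem hj) hx
            rw [QuaternionGroupAux.inv_xa, QuaternionGroup.xa_mul_xa] at h2
            have : (n : ZMod (2 * n)) + i - ((n : ZMod (2 * n)) + j) = i - j := by ring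
            rw [this] at h2
            rwa [hc]
          obtain ⟨k, hk⟩ := (hmem' c).1 h1
          refine ⟨QuaternionGroup.xa ((k : ZMod (2 * m))), ?_⟩
          rw [hφxa, hι]
          have : ((k * (d : ℤ) : ℤ) : ZMod (2 * n)) = i - j := by
            rw [← hc, hk]; push_cast; ring_nf
          rw [this]
          congr 1
          ring
    exact ⟨((MonoidHom.ofInjective hφinj).trans (MulEquiv.subgroupCongr hφrange)).symm⟩
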